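/- Let g, h₀, k, T > 0 and ω, c ∈ ℝ satisfy the capillary-gravity dispersion relation (c − (ω/2)·tanh(k h₀)/k)² = (g + T k²)·tanh(k h₀)/k + (ω²/4)·tanh²(k h₀)/k². Define η(x,t) = cos(k(x−ct)), u(x,y,t) = cos(k(x−ct))·c k cosh(k(h₀+y))/sinh(k h₀), v(x,y,t) = sin(k(x−ct))·c k sinh(k(h₀+y))/sinh(k h₀), and p(x,y,t) = cos(k(x−ct))·((c+ωy)·c k cosh(k(h₀+y)) − ω c sinh(k(h₀+y)))/sinh(k h₀). Then for all t, x ∈ ℝ and all y ∈ [−h₀, 0]: ∂ₜu − ωy·∂ₓu − ωv = −∂ₓp, ∂ₜv − ωy·∂ₓv = −∂_y p, ∂ₓu + ∂_y v = 0, ∂ₓv − ∂_y u = 0; moreover v(x,0,t) = ∂ₜη(x,t), p(x,0,t) = g·η(x,t) − T·∂ₓₓη(x,t), and v(x,−h₀,t) = 0. -/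

import Mathlib

open Real

private lemma hd_arg1 (k x c t : ℝ) : HasDerivAt (fun t' => k * (x - c * t')) (-(k * c)) t := by
  simpa using (((hasDerivAt_id t).const_mul c).const_sub x).const_mul k

private lemma hd_arg2 (k c t x : ℝ) : HasDerivAt (fun x' => k * (x' - c * t)) k x := by
  simpa using ((hasDerivAt_id x).sub_const (c * t)).const_mul k

private lemma hd_arg3 (k h₀ y : ℝ) : HasDerivAt (fun y' => k * (h₀ + y')) k y := by
  simpa using ((hasDerivAt_id y).const_add h₀).const_mul k

private lemma hd_aff (a b z : ℝ) : HasDerivAt (fun z' => a + b * z') b z := by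
  simpa using ((hasDerivAt_id z).const_mul b).const_add a

/-- The explicit sinusoidal ansatz solves the capillary-gravity water wave problem
linearized about the shear flow with constant vorticity `ω` over a channel of depth
`h₀`, with coefficient of surface tension `T`. -/
theorem linearized_capillary_water_waves_constant_vorticity
    (g h₀ k T ω c : ℝ) (hg : 0 < g) (hh₀ : 0 < h₀) (hk : 0 < k) (hT : 0 < T)
    (hdisp : (c - ω / 2 * tanh (k * h₀) / k) ^ 2
      = (g + T * k ^ 2) * tanh (k * h₀) / k + ω ^ 2 / 4 * tanh (k * h₀) ^ 2 / k ^ 2)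
    (η : ℝ → ℝ → ℝ) (u v p : ℝ → ℝ → ℝ → ℝ)
    (hη : ∀ x t, η x t = cos (k * (x - c * t)))
    (hu : ∀ x y t, u x y t
      = cos (k * (x - c * t)) * (c * k * cosh (k * (h₀ + y)) / sinh (k * h₀)))
    (hv : ∀ x y t, v x y t
      = sin (k * (x - c * t)) * (c * k * sinh (k * (h₀ + y)) / sinh (k * h₀)))
    (hp : ∀ x y t, p x y t
      = cos (k * (x - c * t)) *
        (((c + ω * y) * (c * k) * cosh (k * (h₀ + y)) - ω * c * sinh (k * (h₀ + y)))
          / sinh (k * h₀))) :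
    ∀ t x : ℝ, ∀ y ∈ Set.Icc (-h₀) (0 : ℝ),
      (deriv (fun t' => u x y t') t - ω * y * deriv (fun x' => u x' y t) x - ω * v x y t
        = -deriv (fun x' => p x' y t) x) ∧
      (deriv (fun t' => v x y t') t - ω * y * deriv (fun x' => v x' y t) x
        = -deriv (fun y' => p x y' t) y) ∧
      (deriv (fun x' => u x' y t) x + deriv (fun y' => v x y' t) y = 0) ∧
      (deriv (fun x' => v x' y t) x - deriv (fun y' => u x y' t) y = 0) ∧
      (v x 0 t = deriv (fun t' => η x t') t) ∧
      (p x 0 t = g * η x t - T * deriv (fun x' => deriv (fun x'' => η x'' t) x') x) ∧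
      (v x (-h₀) t = 0) := by
  intro t x y hy
  have hsh : sinh (k * h₀) ≠ 0 := ne_of_gt (by simpa using Real.sinh_pos_iff.2 (mul_pos hk hh₀))
  -- key consequence of the dispersion relation
  have key : c^2 * k * cosh (k*h₀) - ω * c * sinh (k*h₀) = (g + T*k^2) * sinh (k*h₀) := by
    have hch : (0:ℝ) < cosh (k*h₀) := cosh_pos (k*h₀)
    rw [tanh_eq_sinh_div_cosh] at hdisp
    field_simp at hdisp
    have h2 : 16 * cosh (k*h₀)^4 * k^4 * (c^2 * k * cosh (k*h₀) - ω * c * sinh (k*h₀))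
        = 16 * cosh (k*h₀)^4 * k^4 * ((g + T*k^2) * sinh (k*h₀)) := by
      linear_combination cosh (k*h₀)^3 * k^3 * hdisp
    exact mul_left_cancel₀ (by positivity) h2
  -- derivatives
  have hut : deriv (fun t' => u x y t') t
      = -sin (k * (x - c * t)) * -(k * c) * (c * k * cosh (k * (h₀ + y)) / sinh (k * h₀)) := by
    simp only [hu]
    exact (((hd_arg1 k x c t).cos).mul_const _).deriv
  have hux : deriv (fun x' => u x' y t) x
      = -sin (k * (x - c * t)) * k * (c * k * cosh (k * (h₀ + y)) / sinh (k * h₀)) := by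
    simp only [hu]
    exact (((hd_arg2 k c t x).cos).mul_const _).deriv
  have huy : deriv (fun y' => u x y' t) y
      = cos (k * (x - c * t)) * (c * k * (sinh (k * (h₀ + y)) * k) / sinh (k * h₀)) := by
    simp only [hu]
    exact ((((hd_arg3 k h₀ y).cosh).const_mul (c * k)).div_const _).const_mul _ |>.deriv
  have hvt : deriv (fun t' => v x y t') t
      = cos (k * (x - c * t)) * -(k * c) * (c * k * sinh (k * (h₀ + y)) / sinh (k * h₀)) := by
    simp only [hv]
    exact (((hd_arg1 k x c t).sin).mul_const _).deriv
  have hvx : deriv (fun x' => v x' y t) x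
      = cos (k * (x - c * t)) * k * (c * k * sinh (k * (h₀ + y)) / sinh (k * h₀)) := by
    simp only [hv]
    exact (((hd_arg2 k c t x).sin).mul_const _).deriv
  have hvy : deriv (fun y' => v x y' t) y
      = sin (k * (x - c * t)) * (c * k * (cosh (k * (h₀ + y)) * k) / sinh (k * h₀)) := by
    simp only [hv]
    exact ((((hd_arg3 k h₀ y).sinh).const_mul (c * k)).div_const _).const_mul _ |>.deriv
  have hpx : deriv (fun x' => p x' y t) x
      = -sin (k * (x - c * t)) * k *
        (((c + ω * y) * (c * k) * cosh (k * (h₀ + y)) - ω * c * sinh (k * (h₀ + y)))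
          / sinh (k * h₀)) := by
    simp only [hp]
    exact (((hd_arg2 k c t x).cos).mul_const _).deriv
  have hpy : deriv (fun y' => p x y' t) y
      = cos (k * (x - c * t)) *
        ((ω * (c * k) * cosh (k * (h₀ + y)) + (c + ω * y) * (c * k) * (sinh (k * (h₀ + y)) * k)
          - ω * c * (cosh (k * (h₀ + y)) * k)) / sinh (k * h₀)) := by
    simp only [hp]
    exact ((((hd_aff c ω y).mul_const (c * k)).mul ((hd_arg3 k h₀ y).cosh)).sub
      (((hd_arg3 k h₀ y).sinh).const_mul (ω * c))).div_const _ |>.const_mul _ |>.deriv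
  have hηt : deriv (fun t' => η x t') t = -sin (k * (x - c * t)) * -(k * c) := by
    simp only [hη]
    exact ((hd_arg1 k x c t).cos).deriv
  have hηx : ∀ x', deriv (fun x'' => η x'' t) x' = -sin (k * (x' - c * t)) * k := by
    intro x'
    simp only [hη]
    exact ((hd_arg2 k c t x').cos).deriv
  have hηxx : deriv (fun x' => deriv (fun x'' => η x'' t) x') x
      = -(cos (k * (x - c * t)) * k) * k := by
    simp only [hηx]
    exact (((hd_arg2 k c t x).sin).neg.mul_const k).deriv
  refine ⟨?_, ?_, ?_, ?_, ?_, ?_, ?_⟩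
  · rw [hut, hux, hpx, hv]; field_simp; ring
  · rw [hvt, hvx, hpy]; field_simp; ring
  · rw [hux, hvy]; field_simp; ring
  · rw [hvx, huy]; field_simp; ring
  · rw [hv, hηt]; field_simp; rw [add_zero]
  · rw [hp, hη, hηxx]
    simp only [add_zero, mul_zero]
    field_simp
    linear_combination cos (k * (x - c * t)) * key
  · rw [hv]; simp
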